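/- Σ_{i=n+1}^{∞} 3/(2i(i−1)(2i−3)(2i+1)) = 1/(8n³ − 2n) for all n ≥ 1. -/

import Mathlib

/-- Tail sum identity: `Σ_{i=n+1}^∞ 3/(2i(i-1)(2i-3)(2i+1))` equals `1/(8n³-2n)` for `n ≥ 1`. -/
theorem tail_sum_identity (n : ℕ) (hn : 1 ≤ n) :
    ∑' k : ℕ,
        (3 : ℝ) / (2 * ((n:ℝ) + 1 + (k:ℝ)) * (((n:ℝ) + 1 + (k:ℝ)) - 1)
          * (2 * ((n:ℝ) + 1 + (k:ℝ)) - 3) * (2 * ((n:ℝ) + 1 + (k:ℝ)) + 1))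
      = 1 / (8 * (n:ℝ) ^ 3 - 2 * (n:ℝ)) := by
  have hn' : (1:ℝ) ≤ (n:ℝ) := by exact_mod_cast hn
  set f : ℕ → ℝ := fun k =>
    (3 : ℝ) / (2 * ((n:ℝ) + 1 + (k:ℝ)) * (((n:ℝ) + 1 + (k:ℝ)) - 1)
      * (2 * ((n:ℝ) + 1 + (k:ℝ)) - 3) * (2 * ((n:ℝ) + 1 + (k:ℝ)) + 1)) with hf
  set g : ℕ → ℝ := fun m =>
    1 / (2 * ((n:ℝ) + (m:ℝ)) * (2 * ((n:ℝ) + (m:ℝ)) - 1) * (2 * ((n:ℝ) + (m:ℝ)) + 1)) with hg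
  have hx : ∀ m : ℕ, (1:ℝ) ≤ (n:ℝ) + (m:ℝ) := fun m => by
    have : (0:ℝ) ≤ (m:ℝ) := Nat.cast_nonneg m
    linarith
  have key : ∀ k : ℕ, f k = g k - g (k+1) := by
    intro k
    have h1 : (n:ℝ) + 1 + (k:ℝ) ≠ 0 := by have := hx k; linarith
    have h2 : (n:ℝ) + 1 + (k:ℝ) - 1 ≠ 0 := by have := hx k; intro h; linarith
    have h3 : 2 * ((n:ℝ) + 1 + (k:ℝ)) - 3 ≠ 0 := by have := hx k; intro h; linarith
    have h4 : 2 * ((n:ℝ) + 1 + (k:ℝ)) + 1 ≠ 0 := by have := hx k; intro h; linarith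
    have h5 : 2 * ((n:ℝ) + (k:ℝ)) - 1 ≠ 0 := by have := hx k; intro h; linarith
    have h6 : (n:ℝ) + (k:ℝ) ≠ 0 := by have := hx k; intro h; linarith
    have h6' : 2 * ((n:ℝ) + (k:ℝ)) + 1 ≠ 0 := by have := hx k; intro h; linarith
    have h7 : (n:ℝ) + ((k:ℝ) + 1) ≠ 0 := by have := hx k; intro h; linarith
    have h8 : 2 * ((n:ℝ) + ((k:ℝ) + 1)) - 1 ≠ 0 := by have := hx k; intro h; linarith
    have h9 : 2 * ((n:ℝ) + ((k:ℝ) + 1)) + 1 ≠ 0 := by have := hx k; intro h; linarith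
    have hcast : ((k:ℝ)+1 : ℝ) = ((k+1 : ℕ) : ℝ) := by push_cast; ring
    simp only [hf, hg]
    rw [← hcast]
    field_simp
    ring
  have hsum0 : ∀ N : ℕ, ∑ k ∈ Finset.range N, f k = g 0 - g N := by
    intro N
    have := Finset.sum_range_sub' g N
    calc ∑ k ∈ Finset.range N, f k = ∑ k ∈ Finset.range N, (g k - g (k+1)) := by
          exact Finset.sum_congr rfl fun k _ => key k
      _ = g 0 - g N := Finset.sum_range_sub' g N
  have hgtend : Filter.Tendsto g Filter.atTop (nhds 0) := by
    have hbase : Filter.Tendsto (fun m : ℕ => (n:ℝ) + (m:ℝ)) Filter.atTop Filter.atTop :=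
      Filter.tendsto_atTop_add_const_left _ _ tendsto_natCast_atTop_atTop
    have h1 : Filter.Tendsto (fun m : ℕ => 2 * ((n:ℝ) + (m:ℝ))) Filter.atTop Filter.atTop :=
      (Filter.tendsto_const_mul_atTop_of_pos (by norm_num)).mpr hbase
    have h2 : Filter.Tendsto (fun m : ℕ => 2 * ((n:ℝ) + (m:ℝ)) - 1) Filter.atTop Filter.atTop :=
      Filter.tendsto_atTop_add_const_right _ _ h1
    have h3 : Filter.Tendsto (fun m : ℕ => 2 * ((n:ℝ) + (m:ℝ)) + 1) Filter.atTop Filter.atTop :=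
      Filter.tendsto_atTop_add_const_right _ _ h1
    have hD : Filter.Tendsto
        (fun m : ℕ => 2 * ((n:ℝ) + (m:ℝ)) * (2 * ((n:ℝ) + (m:ℝ)) - 1) * (2 * ((n:ℝ) + (m:ℝ)) + 1))
        Filter.atTop Filter.atTop :=
      (h1.atTop_mul_atTop₀ h2).atTop_mul_atTop₀ h3
    have := hD.inv_tendsto_atTop
    simp only [hg, one_div]
    exact this
  have hnonneg : ∀ k : ℕ, 0 ≤ f k := by
    intro k
    have := hx k
    have hpos : 0 < 2 * ((n:ℝ) + 1 + (k:ℝ)) * (((n:ℝ) + 1 + (k:ℝ)) - 1)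
        * (2 * ((n:ℝ) + 1 + (k:ℝ)) - 3) * (2 * ((n:ℝ) + 1 + (k:ℝ)) + 1) := by
      have a1 : (0:ℝ) < 2 * ((n:ℝ) + 1 + (k:ℝ)) := by linarith
      have a2 : (0:ℝ) < ((n:ℝ) + 1 + (k:ℝ)) - 1 := by linarith
      have a3 : (0:ℝ) < 2 * ((n:ℝ) + 1 + (k:ℝ)) - 3 := by linarith
      have a4 : (0:ℝ) < 2 * ((n:ℝ) + 1 + (k:ℝ)) + 1 := by linarith
      positivity
    exact div_nonneg (by norm_num) hpos.le
  have hhas : HasSum f (g 0) := by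
    rw [hasSum_iff_tendsto_nat_of_nonneg hnonneg]
    have : Filter.Tendsto (fun N => g 0 - g N) Filter.atTop (nhds (g 0 - 0)) :=
      (tendsto_const_nhds).sub hgtend
    simpa [hsum0] using this
  have hg0 : g 0 = 1 / (8 * (n:ℝ) ^ 3 - 2 * (n:ℝ)) := by
    simp only [hg, Nat.cast_zero, add_zero]
    congr 1
    ring
  exact hhas.tsum_eq.trans hg0
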